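/- arXiv:1811.01360 — 5 statements merged into one kernel-verified Lean document; each statement's English description precedes it below -/
import Mathlib

section
/- For every σ > 0, ω > 0 and c with c² < 4ω, the solitary-wave profile satisfies the Pohozaev-type identity ∫_ℝ |φ_{ω,c}'(x)|² dx = ω · ∫_ℝ |φ_{ω,c}(x)|² dx. -/
open MeasureTheory

/-- The amplitude `Φ_{ω,c}` of the solitary-wave profile for the generalized
derivative nonlinear Schrödinger equation. -/
noncomputable def PhiProf (σ ω c : ℝ) (x : ℝ) : ℝ :=
  ((σ + 1) * (4 * ω - c ^ 2) /
      (2 * Real.sqrt ω * Real.cosh (σ * Real.sqrt (4 * ω - c ^ 2) * x) - c)) ^ (1 / (2 * σ))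

/-- The solitary-wave profile `φ_{ω,c}`. -/
noncomputable def phiProf (σ ω c : ℝ) (x : ℝ) : ℂ :=
  (PhiProf σ ω c x : ℂ) *
    Complex.exp (Complex.I *
      (((c / 2) * x : ℝ) - ((1 / (2 * σ + 2)) * ∫ y in Set.Iic x, PhiProf σ ω c y ^ (2 * σ) : ℝ)))

/-- the denominator -/
noncomputable def Dfun (σ ω c : ℝ) (x : ℝ) : ℝ :=
  2 * Real.sqrt ω * Real.cosh (σ * Real.sqrt (4 * ω - c ^ 2) * x) - c

lemma PhiProf_eq (σ ω c x : ℝ) :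
    PhiProf σ ω c x = ((σ + 1) * (4 * ω - c ^ 2) / Dfun σ ω c x) ^ (1 / (2 * σ)) := rfl

lemma half_add_sq_le_cosh (t : ℝ) : 1/2 + t^2/8 ≤ Real.cosh t := by
  rw [← Real.cosh_abs]
  have h1 : |t|/2 + 1 ≤ Real.exp (|t|/2) := Real.add_one_le_exp _
  have h2 : Real.exp |t| = Real.exp (|t|/2) * Real.exp (|t|/2) := by
    rw [← Real.exp_add]; ring_nf
  have h3 : (0:ℝ) < Real.exp (-|t|) := Real.exp_pos _
  have h4 : (0:ℝ) ≤ |t| := abs_nonneg t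
  have habs : |t|^2 = t^2 := sq_abs t
  rw [Real.cosh_eq]
  nlinarith [Real.exp_pos (|t|/2)]

lemma key_alg (σ c r q h s P D A : ℝ) (hσ : σ ≠ 0) (hσ1 : σ + 1 ≠ 0)
    (hA : A = (σ+1)*q^2)
    (hD : D = 2*r*h - c) (hDne : D ≠ 0) (hh : h^2 = s^2 + 1) (hq : q^2 = 4*r^2 - c^2) :
    (-(P * (2*r*(σ*q)*s) / (2*σ*D)))^2 + (P * (c/2 - 1/(2*σ+2) * (A / D)))^2
      = r^2 * P^2 := by
  subst hA
  have h2σ : (2*σ+2) ≠ 0 := fun hx => hσ1 (by linarith)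
  have hθ : c/2 - 1/(2*σ+2) * ((σ+1)*q^2 / D) = r*(c*h - 2*r)/D := by
    subst hD
    field_simp
    ring_nf
    linear_combination (-1) * hq
  rw [hθ]
  have hkey : q^2*s^2 + (c*h - 2*r)^2 = D^2 := by
    subst hD
    linear_combination (c^2 - 4*r^2) * hh + s^2 * hq
  have h1 : (-(P * (2*r*(σ*q)*s) / (2*σ*D)))^2 = P^2*r^2*(q^2*s^2)/D^2 := by
    rw [neg_sq, div_pow, mul_pow (2*σ) D]
    field_simp
  have h2 : (P * (r*(c*h - 2*r)/D))^2 = P^2*r^2*((c*h-2*r)^2)/D^2 := by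
    rw [mul_pow, div_pow]; ring
  rw [h1, h2, ← add_div, ← mul_add, div_eq_iff (pow_ne_zero 2 hDne), hkey]
  ring

section lemmas

variable {σ ω c : ℝ}

lemma fourSub_pos (hc : c ^ 2 < 4 * ω) : 0 < 4 * ω - c ^ 2 := by linarith

lemma cabs_lt (hω : 0 < ω) (hc : c ^ 2 < 4 * ω) : |c| < 2 * Real.sqrt ω := by
  have hr2 : Real.sqrt ω ^ 2 = ω := Real.sq_sqrt hω.le
  have hrpos : 0 < Real.sqrt ω := Real.sqrt_pos.mpr hω
  nlinarith [sq_abs c, abs_nonneg c]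

lemma Dfun_ge (hω : 0 < ω) (hc : c ^ 2 < 4 * ω) (x : ℝ) :
    (2 * Real.sqrt ω - |c|) * Real.cosh (σ * Real.sqrt (4 * ω - c ^ 2) * x) ≤ Dfun σ ω c x := by
  have h1 := Real.one_le_cosh (σ * Real.sqrt (4 * ω - c ^ 2) * x)
  have h2 := le_abs_self c
  have h3 := abs_nonneg c
  simp only [Dfun]
  nlinarith

lemma Dfun_pos (hω : 0 < ω) (hc : c ^ 2 < 4 * ω) (x : ℝ) : 0 < Dfun σ ω c x := by
  refine lt_of_lt_of_le ?_ (Dfun_ge hω hc x)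
  have := cabs_lt hω hc
  have h1 := Real.one_le_cosh (σ * Real.sqrt (4 * ω - c ^ 2) * x)
  nlinarith

lemma ADfun_pos (hσ : 0 < σ) (hω : 0 < ω) (hc : c ^ 2 < 4 * ω) (x : ℝ) :
    0 < (σ + 1) * (4 * ω - c ^ 2) / Dfun σ ω c x :=
  div_pos (by nlinarith) (Dfun_pos hω hc x)

lemma PhiProf_pos (hσ : 0 < σ) (hω : 0 < ω) (hc : c ^ 2 < 4 * ω) (x : ℝ) :
    0 < PhiProf σ ω c x := by
  rw [PhiProf_eq]
  exact Real.rpow_pos_of_pos (ADfun_pos hσ hω hc x) _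

lemma PhiProf_pow (hσ : 0 < σ) (hω : 0 < ω) (hc : c ^ 2 < 4 * ω) (x : ℝ) :
    PhiProf σ ω c x ^ (2 * σ) = (σ + 1) * (4 * ω - c ^ 2) / Dfun σ ω c x := by
  rw [PhiProf_eq, ← Real.rpow_mul (ADfun_pos hσ hω hc x).le,
    show 1 / (2 * σ) * (2 * σ) = 1 by field_simp, Real.rpow_one]

lemma hasDerivAt_Dfun (σ ω c x : ℝ) :
    HasDerivAt (Dfun σ ω c)
      (2 * Real.sqrt ω * (σ * Real.sqrt (4 * ω - c ^ 2)) *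
        Real.sinh (σ * Real.sqrt (4 * ω - c ^ 2) * x)) x := by
  have h1 : HasDerivAt (fun y : ℝ => σ * Real.sqrt (4 * ω - c ^ 2) * y)
      (σ * Real.sqrt (4 * ω - c ^ 2)) x := by
    simpa using (hasDerivAt_id x).const_mul (σ * Real.sqrt (4 * ω - c ^ 2))
  have h2 := (Real.hasDerivAt_cosh (σ * Real.sqrt (4 * ω - c ^ 2) * x)).comp x h1
  have h3 := (h2.const_mul (2 * Real.sqrt ω)).sub_const c
  refine h3.congr_deriv ?_
  ring

lemma hasDerivAt_PhiProf (hσ : 0 < σ) (hω : 0 < ω) (hc : c ^ 2 < 4 * ω) (x : ℝ) :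
    HasDerivAt (PhiProf σ ω c)
      (-(PhiProf σ ω c x * (2 * Real.sqrt ω * (σ * Real.sqrt (4 * ω - c ^ 2)) *
          Real.sinh (σ * Real.sqrt (4 * ω - c ^ 2) * x)) / (2 * σ * Dfun σ ω c x))) x := by
  have hDne : Dfun σ ω c x ≠ 0 := (Dfun_pos hω hc x).ne'
  have hADpos := ADfun_pos hσ hω hc x
  have hf : HasDerivAt (fun y => (σ + 1) * (4 * ω - c ^ 2) / Dfun σ ω c y)
      ((0 * Dfun σ ω c x - (σ + 1) * (4 * ω - c ^ 2) *
        (2 * Real.sqrt ω * (σ * Real.sqrt (4 * ω - c ^ 2)) *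
          Real.sinh (σ * Real.sqrt (4 * ω - c ^ 2) * x))) / Dfun σ ω c x ^ 2) x :=
    (hasDerivAt_const x _).div (hasDerivAt_Dfun σ ω c x) hDne
  have hrp := (Real.hasDerivAt_rpow_const (x := (σ + 1) * (4 * ω - c ^ 2) / Dfun σ ω c x)
    (p := 1 / (2 * σ)) (Or.inl hADpos.ne')).comp x hf
  have heq : PhiProf σ ω c = fun y =>
      ((σ + 1) * (4 * ω - c ^ 2) / Dfun σ ω c y) ^ (1 / (2 * σ)) := rfl
  rw [heq]
  refine hrp.congr_deriv (Eq.symm ?_)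
  rw [Real.rpow_sub hADpos, Real.rpow_one]
  show -((((σ + 1) * (4 * ω - c ^ 2) / Dfun σ ω c x) ^ (1 / (2 * σ))) * _ / _) = _
  have hAne : (σ + 1) * (4 * ω - c ^ 2) ≠ 0 := by nlinarith
  have h4ne : 4 * ω - c ^ 2 ≠ 0 := (fourSub_pos hc).ne'
  field_simp
  ring

end lemmas

section lemmas2

variable {σ ω c : ℝ}

lemma continuous_ADfun (hω : 0 < ω) (hc : c ^ 2 < 4 * ω) :
    Continuous (fun x => (σ + 1) * (4 * ω - c ^ 2) / Dfun σ ω c x) := by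
  apply continuous_const.div
  · exact ((continuous_const.mul (Real.continuous_cosh.comp
      (continuous_const.mul continuous_id))).sub continuous_const)
  · exact fun x => (Dfun_pos hω hc x).ne'

lemma integrable_ADfun (hσ : 0 < σ) (hω : 0 < ω) (hc : c ^ 2 < 4 * ω) :
    Integrable (fun x => (σ + 1) * (4 * ω - c ^ 2) / Dfun σ ω c x) := by
  set r := Real.sqrt ω with hr
  set k := σ * Real.sqrt (4 * ω - c ^ 2) with hk
  have hkpos : 0 < k := mul_pos hσ (Real.sqrt_pos.mpr (fourSub_pos hc))
  have hm : 0 < 2 * r - |c| := by have := cabs_lt hω hc; linarith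
  set β : ℝ := (2 * r - |c|) * min (1/2) (k^2/8) with hβ
  have hβpos : 0 < β := mul_pos hm (lt_min (by norm_num) (by positivity))
  have hA : (0:ℝ) < (σ + 1) * (4 * ω - c ^ 2) := by nlinarith
  set M : ℝ := (σ + 1) * (4 * ω - c ^ 2) / β with hM
  have hbound : ∀ x : ℝ, (σ + 1) * (4 * ω - c ^ 2) / Dfun σ ω c x ≤ M * (1 + x^2)⁻¹ := by
    intro x
    have h1 : β * (1 + x^2) ≤ Dfun σ ω c x := by
      refine le_trans ?_ (Dfun_ge hω hc x)
      have h2 : 1/2 + (k*x)^2/8 ≤ Real.cosh (k * x) := half_add_sq_le_cosh (k * x)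
      have h3 : min (1/2) (k^2/8) * (1 + x^2) ≤ 1/2 + (k*x)^2/8 := by
        have l1 : min (1/2 : ℝ) (k^2/8) ≤ 1/2 := min_le_left _ _
        have l2 : min (1/2 : ℝ) (k^2/8) ≤ k^2/8 := min_le_right _ _
        nlinarith [sq_nonneg x, sq_nonneg (k*x)]
      calc β * (1 + x^2) = (2*r - |c|) * (min (1/2) (k^2/8) * (1 + x^2)) := by rw [hβ]; ring
        _ ≤ (2*r - |c|) * Real.cosh (k * x) := by
            have := le_trans h3 h2
            exact mul_le_mul_of_nonneg_left this hm.le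
        _ = (2*r - |c|) * Real.cosh (σ * Real.sqrt (4 * ω - c ^ 2) * x) := by rw [hk]
    have hx2 : (0:ℝ) < 1 + x^2 := by positivity
    have h4 : (σ + 1) * (4 * ω - c ^ 2) / Dfun σ ω c x
        ≤ (σ + 1) * (4 * ω - c ^ 2) / (β * (1 + x^2)) :=
      div_le_div_of_nonneg_left hA.le (by positivity) h1  -- check signature
    refine h4.trans_eq ?_
    rw [hM]
    field_simp
  have hInt : Integrable (fun x : ℝ => M * (1 + x^2)⁻¹) :=
    integrable_inv_one_add_sq.const_mul M
  refine hInt.mono ((continuous_ADfun hω hc).aestronglyMeasurable) ?_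
  refine Filter.Eventually.of_forall (fun x => ?_)
  have hADp := (ADfun_pos hσ hω hc x)
  rw [Real.norm_eq_abs, Real.norm_eq_abs, abs_of_nonneg hADp.le, abs_of_nonneg (by positivity)]
  exact hbound x

lemma hasDerivAt_G (hσ : 0 < σ) (hω : 0 < ω) (hc : c ^ 2 < 4 * ω) (x : ℝ) :
    HasDerivAt (fun u => ∫ y in Set.Iic u, PhiProf σ ω c y ^ (2 * σ))
      ((σ + 1) * (4 * ω - c ^ 2) / Dfun σ ω c x) x := by
  have hfun : (fun y => PhiProf σ ω c y ^ (2 * σ))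
      = fun y => (σ + 1) * (4 * ω - c ^ 2) / Dfun σ ω c y :=
    funext (PhiProf_pow hσ hω hc)
  rw [hfun]
  have hint := integrable_ADfun hσ hω hc
  have hcont := continuous_ADfun (σ := σ) hω hc
  have key : ∀ u : ℝ, (∫ y in Set.Iic u, (σ + 1) * (4 * ω - c ^ 2) / Dfun σ ω c y)
      = (∫ y in Set.Iic (0:ℝ), (σ + 1) * (4 * ω - c ^ 2) / Dfun σ ω c y)
        + ∫ y in (0:ℝ)..u, (σ + 1) * (4 * ω - c ^ 2) / Dfun σ ω c y := by
    intro u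
    rw [← intervalIntegral.integral_Iic_sub_Iic hint.integrableOn hint.integrableOn]
    ring
  have h2 : HasDerivAt (fun u : ℝ =>
      (∫ y in Set.Iic (0:ℝ), (σ + 1) * (4 * ω - c ^ 2) / Dfun σ ω c y)
        + ∫ y in (0:ℝ)..u, (σ + 1) * (4 * ω - c ^ 2) / Dfun σ ω c y)
      ((σ + 1) * (4 * ω - c ^ 2) / Dfun σ ω c x) x :=
    (intervalIntegral.integral_hasDerivAt_right (hint.intervalIntegrable)
      (hcont.stronglyMeasurableAtFilter _ _) hcont.continuousAt).const_add _
  exact h2.congr_of_eventuallyEq (Filter.Eventually.of_forall key)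

end lemmas2

section main

variable {σ ω c : ℝ}

lemma phi_eq' (σ ω c : ℝ) : phiProf σ ω c = fun x => (PhiProf σ ω c x : ℂ) *
    Complex.exp (Complex.I *
      ((c/2*x - 1/(2*σ+2) * ∫ y in Set.Iic x, PhiProf σ ω c y ^ (2*σ) : ℝ) : ℂ)) := by
  funext u; simp only [phiProf, Complex.ofReal_sub]

lemma pointwise_identity (hσ : 0 < σ) (hω : 0 < ω) (hc : c ^ 2 < 4 * ω) (x : ℝ) :
    ‖deriv (phiProf σ ω c) x‖ ^ 2 = ω * ‖phiProf σ ω c x‖ ^ 2 := by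
  have hr2 : Real.sqrt ω ^ 2 = ω := Real.sq_sqrt hω.le
  have hq2 : Real.sqrt (4 * ω - c ^ 2) ^ 2 = 4 * ω - c ^ 2 := Real.sq_sqrt (fourSub_pos hc).le
  have hDne := (Dfun_pos (σ := σ) hω hc x).ne'
  have hT : HasDerivAt
      (fun u : ℝ => c/2*u - 1/(2*σ+2) * ∫ y in Set.Iic u, PhiProf σ ω c y ^ (2*σ))
      (c/2 - 1/(2*σ+2) * ((σ + 1) * (4 * ω - c ^ 2) / Dfun σ ω c x)) x := by
    have h1 : HasDerivAt (fun u : ℝ => c/2*u) (c/2) x := by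
      simpa using (hasDerivAt_id x).const_mul (c/2)
    exact h1.sub ((hasDerivAt_G hσ hω hc x).const_mul (1/(2*σ+2)))
  have hE := ((hT.ofReal_comp).const_mul Complex.I).cexp
  have hD : HasDerivAt (phiProf σ ω c)
      (((-(PhiProf σ ω c x * (2 * Real.sqrt ω * (σ * Real.sqrt (4 * ω - c ^ 2)) *
          Real.sinh (σ * Real.sqrt (4 * ω - c ^ 2) * x)) / (2 * σ * Dfun σ ω c x)) : ℝ) : ℂ) *
        Complex.exp (Complex.I *
          ((c/2*x - 1/(2*σ+2) * ∫ y in Set.Iic x, PhiProf σ ω c y ^ (2*σ) : ℝ) : ℂ))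
      + (PhiProf σ ω c x : ℂ) *
        (Complex.exp (Complex.I *
          ((c/2*x - 1/(2*σ+2) * ∫ y in Set.Iic x, PhiProf σ ω c y ^ (2*σ) : ℝ) : ℂ))
         * (Complex.I * ((c/2 - 1/(2*σ+2) * ((σ + 1) * (4 * ω - c ^ 2) / Dfun σ ω c x) : ℝ) : ℂ)))) x := by
    rw [phi_eq']
    exact ((hasDerivAt_PhiProf hσ hω hc x).ofReal_comp).mul hE
  rw [hD.deriv]
  have hval : (((-(PhiProf σ ω c x * (2 * Real.sqrt ω * (σ * Real.sqrt (4 * ω - c ^ 2)) *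
          Real.sinh (σ * Real.sqrt (4 * ω - c ^ 2) * x)) / (2 * σ * Dfun σ ω c x)) : ℝ) : ℂ) *
        Complex.exp (Complex.I *
          ((c/2*x - 1/(2*σ+2) * ∫ y in Set.Iic x, PhiProf σ ω c y ^ (2*σ) : ℝ) : ℂ))
      + (PhiProf σ ω c x : ℂ) *
        (Complex.exp (Complex.I *
          ((c/2*x - 1/(2*σ+2) * ∫ y in Set.Iic x, PhiProf σ ω c y ^ (2*σ) : ℝ) : ℂ))
         * (Complex.I * ((c/2 - 1/(2*σ+2) * ((σ + 1) * (4 * ω - c ^ 2) / Dfun σ ω c x) : ℝ) : ℂ))))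
      = (((-(PhiProf σ ω c x * (2 * Real.sqrt ω * (σ * Real.sqrt (4 * ω - c ^ 2)) *
          Real.sinh (σ * Real.sqrt (4 * ω - c ^ 2) * x)) / (2 * σ * Dfun σ ω c x)) : ℝ) : ℂ)
         + ((PhiProf σ ω c x *
            (c/2 - 1/(2*σ+2) * ((σ + 1) * (4 * ω - c ^ 2) / Dfun σ ω c x)) : ℝ) : ℂ) * Complex.I) *
        Complex.exp (Complex.I *
          ((c/2*x - 1/(2*σ+2) * ∫ y in Set.Iic x, PhiProf σ ω c y ^ (2*σ) : ℝ) : ℂ)) := by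
    push_cast; ring
  have hE1 : ‖(Complex.exp (Complex.I *
      ((c/2*x - 1/(2*σ+2) * ∫ y in Set.Iic x, PhiProf σ ω c y ^ (2*σ) : ℝ) : ℂ)))‖ = 1 := by
    rw [Complex.norm_exp]; simp
  rw [hval, norm_mul, mul_pow, hE1, one_pow, mul_one, Complex.sq_norm,
    Complex.normSq_add_mul_I]
  have hR : ‖phiProf σ ω c x‖ = PhiProf σ ω c x := by
    rw [phi_eq']
    simp only []
    rw [norm_mul, hE1, mul_one, Complex.norm_real, Real.norm_eq_abs, abs_of_pos (PhiProf_pos hσ hω hc x)]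
  rw [hR]
  have hkey := key_alg σ c (Real.sqrt ω) (Real.sqrt (4 * ω - c ^ 2))
    (Real.cosh (σ * Real.sqrt (4 * ω - c ^ 2) * x)) (Real.sinh (σ * Real.sqrt (4 * ω - c ^ 2) * x))
    (PhiProf σ ω c x) (Dfun σ ω c x) ((σ + 1) * (4 * ω - c ^ 2))
    hσ.ne' (by positivity) (by rw [hq2]) rfl hDne (Real.cosh_sq _) (by rw [hq2, hr2])
  rw [hr2] at hkey
  exact hkey

end main

/-- Pohozaev-type identity: `‖φ_{ω,c}'‖_{L²}² = ω ‖φ_{ω,c}‖_{L²}²`. -/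
theorem solitary_wave_pohozaev (σ ω c : ℝ) (hσ : 0 < σ) (hω : 0 < ω) (hc : c ^ 2 < 4 * ω) :
    ∫ x : ℝ, ‖deriv (phiProf σ ω c) x‖ ^ 2 =
      ω * ∫ x : ℝ, ‖phiProf σ ω c x‖ ^ 2 := by
  simp only [pointwise_identity hσ hω hc]
  exact integral_const_mul ω _
end

section
/- For every σ > 0, ω > 0 and c with c² < 4ω, writing α = √(4ω−c²), one has the exact L² identity ∫_ℝ |φ_{ω,c}(x)|² dx = (2/σ)·((σ+1)/(2√ω))^{1/σ} · α^{2/σ − 1} · ∫_0^∞ (cosh x − c/(2√ω))^{−1/σ} dx. -/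
open MeasureTheory

/-- Exact `L²` identity for the solitary-wave profile, with `α = √(4ω − c²)`. -/
theorem solitary_wave_L2_identity (σ ω c : ℝ) (hσ : 0 < σ) (hω : 0 < ω) (hc : c ^ 2 < 4 * ω) :
    ∫ x : ℝ, ‖phiProf σ ω c x‖ ^ 2 =
      (2 / σ) * ((σ + 1) / (2 * Real.sqrt ω)) ^ (1 / σ) *
        Real.sqrt (4 * ω - c ^ 2) ^ (2 / σ - 1) *
        ∫ x in Set.Ioi (0 : ℝ), (Real.cosh x - c / (2 * Real.sqrt ω)) ^ (-(1 / σ)) := by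
  have hα2 : (0:ℝ) < 4 * ω - c ^ 2 := by linarith
  set α := Real.sqrt (4 * ω - c ^ 2) with hαdef
  have hα : 0 < α := Real.sqrt_pos.mpr hα2
  have hαsq : α ^ 2 = 4 * ω - c ^ 2 := Real.sq_sqrt hα2.le
  have hw : 0 < Real.sqrt ω := Real.sqrt_pos.mpr hω
  have hcw : c < 2 * Real.sqrt ω := by
    nlinarith [Real.sq_sqrt hω.le, hw.le, hw]
  set d := c / (2 * Real.sqrt ω) with hd
  have hd1 : d < 1 := (div_lt_one (by positivity)).mpr hcw
  set K := ((σ + 1) / (2 * Real.sqrt ω)) ^ (1 / σ) * α ^ (2 / σ) with hK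
  -- pointwise: |φ|² = K * (cosh (σ α x) - d)^(-(1/σ))
  have key : ∀ x : ℝ, ‖phiProf σ ω c x‖ ^ 2
      = K * (Real.cosh (σ * α * x) - d) ^ (-(1 / σ)) := by
    intro x
    have hcosh : 1 ≤ Real.cosh (σ * α * x) := Real.one_le_cosh _
    have hden : 0 < 2 * Real.sqrt ω * Real.cosh (σ * α * x) - c := by nlinarith
    have hdend : 0 < Real.cosh (σ * α * x) - d := by
      have : d < Real.cosh (σ * α * x) := lt_of_lt_of_le hd1 hcosh
      linarith
    have hbase : 0 < (σ + 1) * (4 * ω - c ^ 2) /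
        (2 * Real.sqrt ω * Real.cosh (σ * α * x) - c) := by positivity
    have hP : 0 < PhiProf σ ω c x := by
      rw [PhiProf]
      exact Real.rpow_pos_of_pos hbase _
    have habs : ‖phiProf σ ω c x‖ = PhiProf σ ω c x := by
      rw [phiProf, norm_mul, Complex.norm_exp]
      have h0 : (Complex.I * (((c / 2) * x : ℝ) -
          ((1 / (2 * σ + 2)) * ∫ y in Set.Iic x, PhiProf σ ω c y ^ (2 * σ) : ℝ))).re = 0 := by
        simp [Complex.mul_re]
      rw [h0, Real.exp_zero, mul_one, Complex.norm_real, Real.norm_eq_abs]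
      exact abs_of_pos hP
    rw [habs, PhiProf]
    rw [← Real.rpow_natCast (_ ^ (1 / (2 * σ))) 2, ← Real.rpow_mul hbase.le]
    have h12 : 1 / (2 * σ) * (2:ℕ) = 1 / σ := by
      push_cast; field_simp
    rw [h12]
    have hden2 : 2 * Real.sqrt ω * Real.cosh (σ * α * x) - c
        = 2 * Real.sqrt ω * (Real.cosh (σ * α * x) - d) := by
      rw [hd]; field_simp
    have hsplit : (σ + 1) * (4 * ω - c ^ 2) /
        (2 * Real.sqrt ω * Real.cosh (σ * α * x) - c)
        = (σ + 1) / (2 * Real.sqrt ω) * α ^ 2 * (Real.cosh (σ * α * x) - d)⁻¹ := by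
      rw [hden2, div_mul_eq_div_div, div_eq_mul_inv
        ((σ + 1) * (4 * ω - c ^ 2) / (2 * Real.sqrt ω)), ← hαsq]
      ring
    rw [hsplit, Real.mul_rpow (by positivity) (by positivity),
      Real.mul_rpow (by positivity) (by positivity),
      ← Real.rpow_natCast α 2, ← Real.rpow_mul hα.le,
      ← Real.rpow_neg_one (Real.cosh (σ * α * x) - d), ← Real.rpow_mul hdend.le]
    push_cast
    rw [hK]
    ring_nf
  simp_rw [key]
  rw [MeasureTheory.integral_const_mul]
  set f : ℝ → ℝ := fun u => (Real.cosh u - d) ^ (-(1 / σ)) with hf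
  have hcomp : (∫ x : ℝ, (Real.cosh (σ * α * x) - d) ^ (-(1 / σ)))
      = |(σ * α)⁻¹| * ∫ u : ℝ, f u := by
    have h := MeasureTheory.Measure.integral_comp_mul_left f (σ * α)
    simp only [hf, smul_eq_mul] at h ⊢
    simp_rw [mul_assoc] at h
    simp_rw [mul_assoc]
    exact h
  rw [hcomp]
  have h1 : (∫ u : ℝ, f u) = ∫ u : ℝ, f |u| :=
    integral_congr_ae (Filter.Eventually.of_forall fun u => by simp [hf, Real.cosh_abs])
  have heven : (∫ u : ℝ, f u) = 2 * ∫ u in Set.Ioi (0:ℝ), f u := by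
    rw [h1, integral_comp_abs]
  rw [heven]
  have habsinv : |(σ * α)⁻¹| = (σ * α)⁻¹ := abs_of_pos (by positivity)
  rw [habsinv, hK, mul_inv, Real.rpow_sub hα, Real.rpow_one]
  simp only [div_eq_mul_inv]
  ring
end

section
/- Let σ > 0 and z₀ ∈ (0,1). Then for every ω > 0 and every c with −2z₀√ω ≤ c < 2√ω, the solitary-wave profile satisfies the uniform lower bound ∫_ℝ |φ_{ω,c}(x)|^{2σ} dx ≥ (2(σ+1)/σ)·√((1−z₀)/(1+z₀)). -/
open MeasureTheory

open Real Filter Topology Set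

private lemma my_tanh_tendsto_one : Tendsto Real.tanh atTop (𝓝 1) := by
  have h : ∀ x : ℝ, Real.tanh x = (1 - Real.exp (-(2 * x))) / (1 + Real.exp (-(2 * x))) := by
    intro x
    rw [Real.tanh_eq_sinh_div_cosh, Real.sinh_eq, Real.cosh_eq]
    have h1 : (0:ℝ) < Real.exp x + Real.exp (-x) := by positivity
    have h2 : (0:ℝ) < 1 + Real.exp (-(2 * x)) := by positivity
    have e1 : Real.exp (-(2 * x)) = Real.exp (-x) * Real.exp (-x) := by
      rw [← Real.exp_add]; ring_nf
    have e2 : Real.exp x * Real.exp (-x) = 1 := by rw [← Real.exp_add]; simp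
    have hL : (Real.exp x - Real.exp (-x)) / 2 / ((Real.exp x + Real.exp (-x)) / 2)
        = (Real.exp x - Real.exp (-x)) / (Real.exp x + Real.exp (-x)) := by
      field_simp
    rw [hL, div_eq_div_iff h1.ne' h2.ne', e1]
    nlinarith [e2]
  have hmul : Tendsto (fun x : ℝ => 2 * x) atTop atTop :=
    Filter.Tendsto.const_mul_atTop (by norm_num) tendsto_id
  have h1 : Tendsto (fun x : ℝ => Real.exp (-(2 * x))) atTop (𝓝 0) :=
    Real.tendsto_exp_neg_atTop_nhds_zero.comp hmul
  have h2 : Tendsto (fun x : ℝ => (1 - Real.exp (-(2 * x))) / (1 + Real.exp (-(2 * x))))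
      atTop (𝓝 1) := by
    have hc1 : Tendsto (fun _ : ℝ => (1:ℝ)) atTop (𝓝 1) := tendsto_const_nhds
    have := (hc1.sub h1).div (hc1.add h1) (by norm_num : (1:ℝ) + 0 ≠ 0)
    rw [show ((1:ℝ) - 0) / (1 + 0) = 1 by norm_num] at this; exact this
  simpa [← h] using h2

private lemma my_half_le_arctan {t : ℝ} (h0 : 0 ≤ t) (h1 : t ≤ 1) : t / 2 ≤ Real.arctan t := by
  have key : ∀ x : ℝ, HasDerivAt (fun s : ℝ => Real.arctan s - s / 2)
      (1 / (1 + x ^ 2) - 1 / 2) x := fun x =>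
    (Real.hasDerivAt_arctan x).sub ((hasDerivAt_id x).div_const 2)
  have mono : MonotoneOn (fun s : ℝ => Real.arctan s - s / 2) (Set.Icc 0 1) := by
    apply monotoneOn_of_deriv_nonneg (convex_Icc 0 1)
    · exact (Real.continuous_arctan.sub (continuous_id.div_const 2)).continuousOn
    · intro x _
      exact (key x).differentiableAt.differentiableWithinAt
    · intro x hx
      rw [interior_Icc, Set.mem_Ioo] at hx
      rw [(key x).deriv]
      have h2 : (0:ℝ) < 1 + x ^ 2 := by positivity
      rw [sub_nonneg, div_le_div_iff₀ (by norm_num) h2]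
      nlinarith [hx.1, hx.2]
  have := mono (Set.left_mem_Icc.2 (by norm_num)) (Set.mem_Icc.2 ⟨h0, h1⟩) h0
  simpa [Real.arctan_zero] using this

set_option maxHeartbeats 1000000 in
/-- Uniform lower bound for the `L^{2σ}` norm of the solitary-wave profile on the
speed range `−2z₀√ω ≤ c < 2√ω`. -/
theorem solitary_wave_L2sigma_lower_bound (σ z₀ : ℝ) (hσ : 0 < σ) (hz₀ : z₀ ∈ Set.Ioo (0 : ℝ) 1) :
    ∀ ω c : ℝ, 0 < ω → -2 * z₀ * Real.sqrt ω ≤ c → c < 2 * Real.sqrt ω →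
      (2 * (σ + 1) / σ) * Real.sqrt ((1 - z₀) / (1 + z₀)) ≤
        ∫ x : ℝ, ‖phiProf σ ω c x‖ ^ (2 * σ) := by
  obtain ⟨hz0, hz1⟩ := hz₀
  intro ω c hω hc1 hc2
  have hsω : 0 < Real.sqrt ω := Real.sqrt_pos.2 hω
  set a : ℝ := 2 * Real.sqrt ω with ha_def
  have ha : 0 < a := by positivity
  have ha2 : a ^ 2 = 4 * ω := by
    rw [ha_def, mul_pow, sq_sqrt hω.le]; ring
  have hca : c < a := hc2
  have hc1' : -(z₀ * a) ≤ c := by rw [ha_def]; linarith [hc1]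
  have hac : -a < c := by nlinarith
  have hd : 0 < 4 * ω - c ^ 2 := by nlinarith
  set k : ℝ := Real.sqrt (4 * ω - c ^ 2) with hk_def
  have hk : 0 < k := Real.sqrt_pos.2 hd
  have hk2 : k ^ 2 = 4 * ω - c ^ 2 := Real.sq_sqrt hd.le
  set b : ℝ := σ * k with hb_def
  have hb : 0 < b := by positivity
  set A : ℝ := (σ + 1) * (4 * ω - c ^ 2) with hA_def
  have hA : 0 < A := by positivity
  have hacp : 0 < a + c := by linarith
  have hacm : 0 < a - c := by linarith
  set T : ℝ := Real.sqrt ((a + c) / (a - c)) with hT_def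
  have hTq : 0 ≤ (a + c) / (a - c) := by positivity
  have hT : 0 < T := Real.sqrt_pos.2 (by positivity)
  have hT2 : T ^ 2 * (a - c) = a + c := by
    rw [hT_def, Real.sq_sqrt hTq]; field_simp
  have hTk : T * (a - c) = k := by
    have h1 : 4 * ω - c ^ 2 = (a + c) / (a - c) * (a - c) ^ 2 := by
      field_simp; nlinarith [ha2]
    rw [hk_def, h1, Real.sqrt_mul hTq, Real.sqrt_sq hacm.le]
  set f : ℝ → ℝ := fun x => A / (a * Real.cosh (b * x) - c) with hf_def
  have hDen : ∀ y : ℝ, 0 < a * Real.cosh y - c := by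
    intro y; nlinarith [Real.one_le_cosh y]
  have hfpos : ∀ x : ℝ, 0 < f x := fun x => div_pos hA (hDen (b * x))
  -- pointwise identity
  have hpt : ∀ x : ℝ, ‖phiProf σ ω c x‖ ^ (2 * σ) = f x := by
    intro x
    have hden' : 0 < a * Real.cosh (b * x) - c := hDen _
    have hbase : 0 < A / (a * Real.cosh (b * x) - c) := div_pos hA hden'
    have hPhi : PhiProf σ ω c x = (A / (a * Real.cosh (b * x) - c)) ^ (1 / (2 * σ)) := rfl
    have habs : ‖phiProf σ ω c x‖ = PhiProf σ ω c x := by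
      unfold phiProf
      rw [norm_mul, Complex.norm_exp, Complex.norm_real, Real.norm_eq_abs]
      have hre : (Complex.I *
          (((c / 2) * x : ℝ) - ((1 / (2 * σ + 2)) *
            ∫ y in Set.Iic x, PhiProf σ ω c y ^ (2 * σ) : ℝ))).re = 0 := by
        simp
      rw [hre, Real.exp_zero, mul_one, hPhi]
      exact abs_of_nonneg (Real.rpow_nonneg hbase.le _)
    rw [habs, hPhi, ← Real.rpow_mul hbase.le,
      one_div_mul_cancel (by positivity : (2 * σ) ≠ 0), Real.rpow_one]
  -- the antiderivative
  set F : ℝ → ℝ := fun x => (2 * A / (b * k)) * Real.arctan (T * Real.tanh (b * x / 2))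
    with hF_def
  have htanh : ∀ y : ℝ, HasDerivAt Real.tanh (1 / Real.cosh y ^ 2) y := by
    intro y
    have h := (Real.hasDerivAt_sinh y).div (Real.hasDerivAt_cosh y) (Real.cosh_pos y).ne'
    have heq : (Real.cosh y * Real.cosh y - Real.sinh y * Real.sinh y) / Real.cosh y ^ 2
        = 1 / Real.cosh y ^ 2 := by
      rw [show Real.cosh y * Real.cosh y - Real.sinh y * Real.sinh y
          = Real.cosh y ^ 2 - Real.sinh y ^ 2 by ring, Real.cosh_sq_sub_sinh_sq]
    rw [← heq]
    have hfun : (fun y => Real.sinh y / Real.cosh y) = Real.tanh := by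
      funext z; rw [Real.tanh_eq_sinh_div_cosh]
    rw [← hfun]
    exact h
  have hFderiv : ∀ x : ℝ, HasDerivAt F (f x) x := by
    intro x
    have h1 : HasDerivAt (fun y : ℝ => b * y / 2) (b / 2) x := by
      simpa using ((hasDerivAt_id x).const_mul b).div_const 2
    have h2 : HasDerivAt (fun y : ℝ => Real.tanh (b * y / 2))
        (1 / Real.cosh (b * x / 2) ^ 2 * (b / 2)) x := by have := (htanh (b * x / 2)).comp x h1; exact this
    have h3 := h2.const_mul T
    have h4 : HasDerivAt (fun y : ℝ => Real.arctan (T * Real.tanh (b * y / 2)))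
        (1 / (1 + (T * Real.tanh (b * x / 2)) ^ 2)
          * (T * (1 / Real.cosh (b * x / 2) ^ 2 * (b / 2)))) x :=
      (Real.hasDerivAt_arctan _).comp x h3
    have h5 := h4.const_mul (2 * A / (b * k))
    convert h5 using 1
    · rfl
    · rfl
    set C := Real.cosh (b * x / 2) with hC_def
    set S := Real.sinh (b * x / 2) with hS_def
    have hC : 0 < C := Real.cosh_pos _
    have hCS : C ^ 2 - S ^ 2 = 1 := Real.cosh_sq_sub_sinh_sq _
    have hbx : b * x = 2 * (b * x / 2) := by ring
    have hcosh2 : Real.cosh (b * x) = C ^ 2 + S ^ 2 := by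
      rw [hbx, Real.cosh_two_mul]
    have htanheq : Real.tanh (b * x / 2) = S / C := Real.tanh_eq_sinh_div_cosh _
    have hden2 : 0 < a * (C ^ 2 + S ^ 2) - c := by
      rw [← hcosh2]; exact hDen _
    have key : k * (C ^ 2 + T ^ 2 * S ^ 2) = T * (a * (C ^ 2 + S ^ 2) - c) := by
      linear_combination (C ^ 2 + T ^ 2 * S ^ 2) * hTk.symm + T * S ^ 2 * hT2
        + (-(T * c)) * hCS
    have hCT : 0 < C ^ 2 + T ^ 2 * S ^ 2 := by positivity
    have hq : 1 + (T * (S / C)) ^ 2 = (C ^ 2 + T ^ 2 * S ^ 2) / C ^ 2 := by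
      field_simp
    have hrhs : 2 * A / (b * k) * (1 / (1 + (T * (S / C)) ^ 2) * (T * (1 / C ^ 2 * (b / 2))))
        = A * T / (k * (C ^ 2 + T ^ 2 * S ^ 2)) := by
      rw [hq]
      field_simp
    have hlhs : A / (a * (C ^ 2 + S ^ 2) - c) = A * T / (k * (C ^ 2 + T ^ 2 * S ^ 2)) := by
      rw [div_eq_div_iff hden2.ne' (by positivity : (k * (C ^ 2 + T ^ 2 * S ^ 2)) ≠ 0)]
      linear_combination A * key
    show A / (a * Real.cosh (b * x) - c)
        = 2 * A / (b * k) * (1 / (1 + (T * Real.tanh (b * x / 2)) ^ 2)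
          * (T * (1 / Real.cosh (b * x / 2) ^ 2 * (b / 2))))
    rw [hcosh2, htanheq, hlhs, hrhs]
  -- limit of F at infinity
  have hlim : Tendsto F atTop (𝓝 ((2 * A / (b * k)) * Real.arctan T)) := by
    have hmul : Tendsto (fun x : ℝ => b * x / 2) atTop atTop :=
      (Filter.Tendsto.const_mul_atTop hb tendsto_id).atTop_div_const (by norm_num)
    have h2 : Tendsto (fun x : ℝ => Real.tanh (b * x / 2)) atTop (𝓝 1) :=
      my_tanh_tendsto_one.comp hmul
    have h3 : Tendsto (fun x : ℝ => T * Real.tanh (b * x / 2)) atTop (𝓝 T) := by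
      have := h2.const_mul T
      simpa using this
    have h4 : Tendsto (fun x : ℝ => Real.arctan (T * Real.tanh (b * x / 2))) atTop
        (𝓝 (Real.arctan T)) := (Real.continuous_arctan.tendsto T).comp h3
    exact h4.const_mul _
  have hF0 : F 0 = 0 := by
    rw [hF_def]; simp
  have hIoi : ∫ x in Set.Ioi (0:ℝ), f x = (2 * A / (b * k)) * Real.arctan T - F 0 :=
    integral_Ioi_of_hasDerivAt_of_nonneg' (fun x _ => hFderiv x)
      (fun x _ => (hfpos x).le) hlim
  have heven : ∀ x : ℝ, f |x| = f x := by
    intro x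
    rw [hf_def]
    simp only
    rw [show b * |x| = |b * x| by rw [abs_mul, abs_of_pos hb], Real.cosh_abs]
  have htotal : ∫ x : ℝ, f x = 2 * ∫ x in Set.Ioi (0:ℝ), f x := by
    rw [← integral_comp_abs (f := f)]
    congr 1
    funext x
    rw [heven x]
  -- final computation
  have hconst : 2 * A / (b * k) = 2 * (σ + 1) / σ := by
    rw [hA_def, hb_def, ← hk2]
    field_simp
  have hval : ∫ x : ℝ, ‖phiProf σ ω c x‖ ^ (2 * σ)
      = 2 * (2 * (σ + 1) / σ) * Real.arctan T := by
    rw [show (fun x : ℝ => ‖phiProf σ ω c x‖ ^ (2 * σ)) = f from funext hpt]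
    rw [htotal, hIoi, hF0, hconst]
    ring
  rw [hval]
  -- inequality side
  set t₀ : ℝ := Real.sqrt ((1 - z₀) / (1 + z₀)) with ht₀_def
  have hq₀ : 0 ≤ (1 - z₀) / (1 + z₀) := by
    apply div_nonneg <;> linarith
  have ht₀0 : 0 ≤ t₀ := Real.sqrt_nonneg _
  have ht₀1 : t₀ ≤ 1 := Real.sqrt_le_one.mpr (by rw [div_le_one (by linarith)]; linarith)
  have hTt : t₀ ≤ T := by
    apply Real.sqrt_le_sqrt
    rw [div_le_div_iff₀ (by linarith) hacm]
    nlinarith [hc1', ha]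
  have harct : t₀ / 2 ≤ Real.arctan t₀ := my_half_le_arctan ht₀0 ht₀1
  have harct2 : Real.arctan t₀ ≤ Real.arctan T := Real.arctan_strictMono.monotone hTt
  have hcpos : 0 < 2 * (σ + 1) / σ := by positivity
  calc 2 * (σ + 1) / σ * t₀ = (2 * (σ + 1) / σ) * (2 * (t₀ / 2)) := by ring
    _ ≤ 2 * (2 * (σ + 1) / σ) * Real.arctan T := by nlinarith [harct, harct2]
end

section
/- For every σ > 0 and ω > 0, the L^{2σ} norm of the solitary-wave profile tends to zero at the left endpoint of the admissible speed interval: ∫_ℝ |φ_{ω,c}(x)|^{2σ} dx → 0 as c → −2√ω from the right (with c ranging over (−2√ω, 2√ω)). -/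
open MeasureTheory

lemma integrable_exp_neg_abs' : Integrable (fun u : ℝ => Real.exp (-|u|)) := by
  have h1 : IntegrableOn (fun u : ℝ => Real.exp (-|u|)) (Set.Iic 0) := by
    apply (integrableOn_exp_Iic 0).congr_fun ?_ measurableSet_Iic
    intro x hx
    simp only [Set.mem_Iic] at hx
    simp [abs_of_nonpos hx]
  have h2 : IntegrableOn (fun u : ℝ => Real.exp (-|u|)) (Set.Ioi 0) := by
    have := exp_neg_integrableOn_Ioi 0 (b := 1) one_pos
    apply this.congr_fun ?_ measurableSet_Ioi
    intro x hx
    simp only [Set.mem_Ioi] at hx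
    simp [abs_of_pos hx]
  have := h1.union h2
  rwa [Set.Iic_union_Ioi, integrableOn_univ] at this

lemma phi_abs_pow (σ ω c : ℝ) (hσ : 0 < σ) (hω : 0 < ω) (hc : c < 2 * Real.sqrt ω)
    (hd : 0 ≤ 4 * ω - c ^ 2) (x : ℝ) :
    ‖phiProf σ ω c x‖ ^ (2 * σ) =
      (σ + 1) * (4 * ω - c ^ 2) /
        (2 * Real.sqrt ω * Real.cosh (σ * Real.sqrt (4 * ω - c ^ 2) * x) - c) := by
  have hs0 : 0 < Real.sqrt ω := Real.sqrt_pos.2 hω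
  have hD : 0 < 2 * Real.sqrt ω * Real.cosh (σ * Real.sqrt (4 * ω - c ^ 2) * x) - c := by
    nlinarith [Real.one_le_cosh (σ * Real.sqrt (4 * ω - c ^ 2) * x)]
  have hbnn : 0 ≤ (σ + 1) * (4 * ω - c ^ 2) /
      (2 * Real.sqrt ω * Real.cosh (σ * Real.sqrt (4 * ω - c ^ 2) * x) - c) :=
    div_nonneg (by nlinarith) hD.le
  rw [phiProf, norm_mul, Complex.norm_exp]
  have him : (Complex.I *
      (((c / 2) * x : ℝ) - ((1 / (2 * σ + 2)) * ∫ y in Set.Iic x, PhiProf σ ω c y ^ (2 * σ) : ℝ))).re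
      = 0 := by simp
  rw [him, Real.exp_zero, mul_one, Complex.norm_real, Real.norm_eq_abs, PhiProf,
    abs_of_nonneg (Real.rpow_nonneg hbnn _), ← Real.rpow_mul hbnn]
  have : 1 / (2 * σ) * (2 * σ) = 1 := by field_simp
  rw [this, Real.rpow_one]

set_option maxHeartbeats 1000000 in
lemma solitary_key (σ ω c : ℝ) (hσ : 0 < σ) (hω : 0 < ω) (hc1 : -2 * Real.sqrt ω < c)
    (hc0 : c < 0) :
    (∫ x : ℝ, ‖phiProf σ ω c x‖ ^ (2 * σ)) ≤
      (σ + 1) / (Real.sqrt ω * σ) * Real.sqrt (4 * ω - c ^ 2) *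
        (∫ u : ℝ, Real.exp (-|u|)) := by
  have hs0 : 0 < Real.sqrt ω := Real.sqrt_pos.2 hω
  have hωs : Real.sqrt ω * Real.sqrt ω = ω := Real.mul_self_sqrt hω.le
  have hd : 0 < 4 * ω - c ^ 2 := by nlinarith
  have hc2 : c < 2 * Real.sqrt ω := by nlinarith
  have habs : (fun x : ℝ => ‖phiProf σ ω c x‖ ^ (2 * σ)) =
      fun x : ℝ => (σ + 1) * (4 * ω - c ^ 2) /
        (2 * Real.sqrt ω * Real.cosh (σ * Real.sqrt (4 * ω - c ^ 2) * x) - c) :=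
    funext (phi_abs_pow σ ω c hσ hω hc2 hd.le)
  rw [habs]
  clear habs
  have ht0 : 0 < Real.sqrt (4 * ω - c ^ 2) := Real.sqrt_pos.2 hd
  have htt : Real.sqrt (4 * ω - c ^ 2) * Real.sqrt (4 * ω - c ^ 2) = 4 * ω - c ^ 2 :=
    Real.mul_self_sqrt hd.le
  set t := Real.sqrt (4 * ω - c ^ 2) with ht
  set k := σ * t with hk
  have hk0 : 0 < k := mul_pos hσ ht0
  have hD : ∀ x : ℝ, 0 < 2 * Real.sqrt ω * Real.cosh (k * x) - c := by
    intro x; nlinarith [Real.one_le_cosh (k * x)]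
  have hbnn : ∀ x : ℝ, 0 ≤ (σ + 1) * (4 * ω - c ^ 2) /
      (2 * Real.sqrt ω * Real.cosh (k * x) - c) :=
    fun x => div_nonneg (by nlinarith) (hD x).le
  have hbound : ∀ x : ℝ, (σ + 1) * (4 * ω - c ^ 2) /
      (2 * Real.sqrt ω * Real.cosh (k * x) - c) ≤
      (σ + 1) * (4 * ω - c ^ 2) / Real.sqrt ω * Real.exp (-|k * x|) := by
    intro x
    have he : Real.exp |k * x| ≤ Real.exp (k * x) + Real.exp (-(k * x)) := by
      rcases abs_cases (k * x) with ⟨h, _⟩ | ⟨h, _⟩ <;> rw [h]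
      · exact le_add_of_nonneg_right (Real.exp_pos _).le
      · exact le_add_of_nonneg_left (Real.exp_pos _).le
    have hdenom : Real.sqrt ω * Real.exp |k * x| ≤
        2 * Real.sqrt ω * Real.cosh (k * x) - c := by
      rw [Real.cosh_eq]; nlinarith [Real.exp_pos (k * x), Real.exp_pos (-(k * x))]
    calc (σ + 1) * (4 * ω - c ^ 2) / (2 * Real.sqrt ω * Real.cosh (k * x) - c)
        ≤ (σ + 1) * (4 * ω - c ^ 2) / (Real.sqrt ω * Real.exp |k * x|) :=
          div_le_div_of_nonneg_left (by nlinarith) (by positivity) hdenom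
      _ = (σ + 1) * (4 * ω - c ^ 2) / Real.sqrt ω * Real.exp (-|k * x|) := by
          rw [Real.exp_neg, ← div_div, div_eq_mul_inv]
  have hexp_int : Integrable (fun x : ℝ => Real.exp (-|k * x|)) :=
    (integrable_comp_mul_left_iff (fun u : ℝ => Real.exp (-|u|)) hk0.ne').2
      integrable_exp_neg_abs'
  have hg_int : Integrable (fun x : ℝ =>
      (σ + 1) * (4 * ω - c ^ 2) / Real.sqrt ω * Real.exp (-|k * x|)) :=
    hexp_int.const_mul _
  have hf_int : Integrable (fun x : ℝ => (σ + 1) * (4 * ω - c ^ 2) /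
      (2 * Real.sqrt ω * Real.cosh (k * x) - c)) := by
    apply hg_int.mono'
    · apply Continuous.aestronglyMeasurable
      exact continuous_const.div (by continuity) fun x => (hD x).ne'
    · refine Filter.Eventually.of_forall fun x => ?_
      rw [Real.norm_eq_abs, abs_of_nonneg (hbnn x)]
      exact hbound x
  calc (∫ x : ℝ, (σ + 1) * (4 * ω - c ^ 2) /
        (2 * Real.sqrt ω * Real.cosh (k * x) - c))
      ≤ ∫ x : ℝ, (σ + 1) * (4 * ω - c ^ 2) / Real.sqrt ω * Real.exp (-|k * x|) :=
        integral_mono hf_int hg_int hbound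
    _ = (σ + 1) * (4 * ω - c ^ 2) / Real.sqrt ω * ∫ x : ℝ, Real.exp (-|k * x|) :=
        integral_const_mul _ _
    _ = (σ + 1) * (4 * ω - c ^ 2) / Real.sqrt ω *
          (|k⁻¹| * ∫ u : ℝ, Real.exp (-|u|)) := by
        rw [Measure.integral_comp_mul_left (fun u : ℝ => Real.exp (-|u|)) k, smul_eq_mul]
    _ = (σ + 1) / (Real.sqrt ω * σ) * t * (∫ u : ℝ, Real.exp (-|u|)) := by
        rw [abs_of_pos (inv_pos.2 hk0), hk, ← htt]
        generalize (∫ u : ℝ, Real.exp (-|u|)) = X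
        field_simp

/-- For every `σ > 0` and `ω > 0`, the `L^{2σ}` norm of the solitary-wave profile tends to `0`
as `c → −2√ω` from within the admissible speed interval `(−2√ω, 2√ω)`. -/
theorem solitary_wave_L2sigma_tendsto_zero (σ ω : ℝ) (hσ : 0 < σ) (hω : 0 < ω) :
    Filter.Tendsto (fun c : ℝ => ∫ x : ℝ, ‖phiProf σ ω c x‖ ^ (2 * σ))
      (nhdsWithin (-2 * Real.sqrt ω) (Set.Ioo (-2 * Real.sqrt ω) (2 * Real.sqrt ω)))
      (nhds 0) := by
  have hs0 : 0 < Real.sqrt ω := Real.sqrt_pos.2 hω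
  set C := ∫ u : ℝ, Real.exp (-|u|) with hC
  set B : ℝ → ℝ := fun c => (σ + 1) / (Real.sqrt ω * σ) * Real.sqrt (4 * ω - c ^ 2) * C
    with hBdef
  have hnonneg : ∀ c : ℝ, 0 ≤ ∫ x : ℝ, ‖phiProf σ ω c x‖ ^ (2 * σ) := fun c =>
    integral_nonneg fun x => Real.rpow_nonneg (norm_nonneg _) _
  apply squeeze_zero' (Filter.Eventually.of_forall hnonneg)
  · have h1 : ∀ᶠ c in nhdsWithin (-2 * Real.sqrt ω)
        (Set.Ioo (-2 * Real.sqrt ω) (2 * Real.sqrt ω)),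
        c ∈ Set.Ioo (-2 * Real.sqrt ω) (2 * Real.sqrt ω) := eventually_mem_nhdsWithin
    have h2 : ∀ᶠ c in nhdsWithin (-2 * Real.sqrt ω)
        (Set.Ioo (-2 * Real.sqrt ω) (2 * Real.sqrt ω)), c < 0 := by
      apply Filter.Eventually.filter_mono nhdsWithin_le_nhds
      exact eventually_nhds_iff.2 ⟨Set.Iio 0, fun y hy => hy, isOpen_Iio, Set.mem_Iio.2 (by linarith)⟩
    filter_upwards [h1, h2] with c hc hc0
    exact solitary_key σ ω c hσ hω hc.1 hc0
  · have hBcont : Continuous B := by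
      apply Continuous.mul (Continuous.mul continuous_const ?_) continuous_const
      exact Real.continuous_sqrt.comp (by continuity)
    have hB0 : B (-2 * Real.sqrt ω) = 0 := by
      have h4 : 4 * ω - (-2 * Real.sqrt ω) ^ 2 = 0 := by
        have := Real.sq_sqrt hω.le
        nlinarith
      show (σ + 1) / (Real.sqrt ω * σ) * Real.sqrt (4 * ω - (-2 * Real.sqrt ω) ^ 2) * C = 0
      rw [h4, Real.sqrt_zero, mul_zero, zero_mul]
    have := (hBcont.tendsto (-2 * Real.sqrt ω)).mono_left
      (nhdsWithin_le_nhds (s := Set.Ioo (-2 * Real.sqrt ω) (2 * Real.sqrt ω)))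
    rwa [hB0] at this
end

section
/- Let σ ≥ 2, set s_c = 1/2 − 1/(2σ), and let ω > 0, z ∈ (0,1) and c = −2z√ω. Then the solitary-wave profile satisfies the exact scaling identity ‖φ_{ω,c}‖_{Ḣ^{s_c}(ℝ)} = (2(σ+1))^{1/(2σ)} · ‖x ↦ e^{−izx} g_z(x)‖_{Ḣ^{s_c}(ℝ)}. -/
open MeasureTheory

/-- The rescaled profile `h_z(x) = (cosh(2σx) + z)^{−1/(2σ)}`. -/
noncomputable def hProf (σ z : ℝ) (x : ℝ) : ℝ :=
  (Real.cosh (2 * σ * x) + z) ^ (-(1 / (2 * σ)))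

/-- The renormalized profile `g_z`. -/
noncomputable def gProf (σ z : ℝ) (x : ℝ) : ℂ :=
  (((1 - z ^ 2) ^ (1 / (2 * σ)) * hProf σ z (Real.sqrt (1 - z ^ 2) * x) : ℝ) : ℂ) *
    Complex.exp (-Complex.I * ((Real.sqrt (1 - z ^ 2) *
      ∫ y in Set.Iic (Real.sqrt (1 - z ^ 2) * x), hProf σ z y ^ (2 * σ) : ℝ) : ℂ))

/-- The homogeneous Sobolev norm `‖f‖_{Ḣ^s}`. -/
noncomputable def hDotNorm (s : ℝ) (f : ℝ → ℂ) : ℝ :=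
  Real.sqrt (∫ ξ : ℝ, |ξ| ^ (2 * s) * ‖FourierTransform.fourier f ξ‖ ^ 2)

/- ### Auxiliary lemmas -/

lemma integral_Iic_comp_mul_left (f : ℝ → ℝ) {a : ℝ} (ha : 0 < a) (x : ℝ) :
    ∫ y in Set.Iic x, f (a * y) = a⁻¹ * ∫ y in Set.Iic (a * x), f y := by
  rw [← integral_indicator measurableSet_Iic, ← integral_indicator measurableSet_Iic]
  have h : ∀ y : ℝ, Set.indicator (Set.Iic x) (fun y => f (a * y)) y
      = Set.indicator (Set.Iic (a * x)) f (a * y) := by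
    intro y
    by_cases hy : y ≤ x
    · rw [Set.indicator_of_mem (Set.mem_Iic.mpr hy),
        Set.indicator_of_mem (Set.mem_Iic.mpr (mul_le_mul_of_nonneg_left hy ha.le))]
    · rw [Set.indicator_of_notMem (by simpa using hy), Set.indicator_of_notMem]
      simp only [Set.mem_Iic, not_le] at hy ⊢
      exact mul_lt_mul_of_pos_left hy ha
  simp_rw [h]
  rw [MeasureTheory.Measure.integral_comp_mul_left (Set.indicator (Set.Iic (a * x)) f) a,
    smul_eq_mul, abs_inv, abs_of_pos ha]

lemma fourierIntegral_comp_mul_left' (f : ℝ → ℂ) (A : ℂ) {l : ℝ} (hl : 0 < l) (ξ : ℝ) :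
    FourierTransform.fourier (fun x => A * f (l * x)) ξ
      = ((l⁻¹ : ℝ) : ℂ) * (A * FourierTransform.fourier f (ξ / l)) := by
  rw [Real.fourier_real_eq_integral_exp_smul,
    Real.fourier_real_eq_integral_exp_smul]
  have h : ∀ x : ℝ,
      Complex.exp (((-2 * Real.pi * x * ξ : ℝ) : ℂ) * Complex.I) • (A * f (l * x))
      = A * ((fun v : ℝ => Complex.exp (((-2 * Real.pi * v * (ξ / l) : ℝ) : ℂ) * Complex.I)
          • f v) (l * x)) := by
    intro x
    have harg : -2 * Real.pi * (l * x) * (ξ / l) = -2 * Real.pi * x * ξ := by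
      field_simp
    simp only [harg, smul_eq_mul]; ring
  simp_rw [h]
  have hcov : (∫ a : ℝ, Complex.exp (((-2 * Real.pi * (l * a) * (ξ / l) : ℝ) : ℂ) * Complex.I)
        • f (l * a))
      = |l⁻¹| • ∫ v : ℝ, Complex.exp (((-2 * Real.pi * v * (ξ / l) : ℝ) : ℂ) * Complex.I)
        • f v :=
    MeasureTheory.Measure.integral_comp_mul_left
      (fun v : ℝ => Complex.exp (((-2 * Real.pi * v * (ξ / l) : ℝ) : ℂ) * Complex.I) • f v) l
  rw [MeasureTheory.integral_const_mul, hcov, abs_inv, abs_of_pos hl, Complex.real_smul]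
  ring

lemma hDotNorm_comp_mul_left (s : ℝ) (f : ℝ → ℂ) {A l : ℝ} (hA : 0 ≤ A) (hl : 0 < l) :
    hDotNorm s (fun x => (A : ℂ) * f (l * x)) = A * l ^ (s - 1 / 2) * hDotNorm s f := by
  unfold hDotNorm
  have key : ∀ ξ : ℝ, |ξ| ^ (2 * s) *
        ‖FourierTransform.fourier (fun x => (A : ℂ) * f (l * x)) ξ‖ ^ 2
      = (A * l ^ (s - 1 / 2)) ^ 2 * (l⁻¹ *
        ((fun η : ℝ => |η| ^ (2 * s) * ‖FourierTransform.fourier f η‖ ^ 2) (ξ / l))) := by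
    intro ξ
    rw [fourierIntegral_comp_mul_left' f _ hl ξ]
    have h1 : ‖((l⁻¹ : ℝ) : ℂ) * ((A : ℂ) * FourierTransform.fourier f (ξ / l))‖
        = l⁻¹ * (A * ‖FourierTransform.fourier f (ξ / l)‖) := by
      rw [norm_mul, norm_mul, Complex.norm_real, Complex.norm_real, Real.norm_eq_abs,
          Real.norm_eq_abs,
        abs_of_pos (inv_pos.mpr hl), abs_of_nonneg hA]
    rw [h1]
    have hxi : |ξ| = l * |ξ / l| := by
      rw [abs_div, abs_of_pos hl]; field_simp
    have h2 : |ξ| ^ (2 * s) = l ^ (2 * s) * |ξ / l| ^ (2 * s) := by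
      conv_lhs => rw [hxi]
      rw [Real.mul_rpow hl.le (abs_nonneg _)]
    have h3 : (A * l ^ (s - 1 / 2)) ^ 2 = A ^ 2 * l ^ (2 * s - 1) := by
      rw [mul_pow, ← Real.rpow_natCast (l ^ (s - 1 / 2)) 2, ← Real.rpow_mul hl.le,
        show ((s - 1 / 2) * ((2 : ℕ) : ℝ) : ℝ) = 2 * s - 1 by push_cast; ring]
    rw [h2, h3, Real.rpow_sub hl, Real.rpow_one]
    field_simp
  simp_rw [key]
  have hcov : (∫ a : ℝ, |a / l| ^ (2 * s) * ‖FourierTransform.fourier f (a / l)‖ ^ 2)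
      = |l| • ∫ η : ℝ, |η| ^ (2 * s) * ‖FourierTransform.fourier f η‖ ^ 2 :=
    MeasureTheory.Measure.integral_comp_div
      (fun η : ℝ => |η| ^ (2 * s) * ‖FourierTransform.fourier f η‖ ^ 2) l
  rw [MeasureTheory.integral_const_mul, MeasureTheory.integral_const_mul, hcov, smul_eq_mul]
  rw [show (A * l ^ (s - 1 / 2)) ^ 2 * (l⁻¹ * (|l| *
      ∫ η : ℝ, |η| ^ (2 * s) * ‖FourierTransform.fourier f η‖ ^ 2))
    = (A * l ^ (s - 1 / 2)) ^ 2 *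
      ∫ η : ℝ, |η| ^ (2 * s) * ‖FourierTransform.fourier f η‖ ^ 2 by
    rw [abs_of_pos hl]; field_simp]
  rw [Real.sqrt_mul (sq_nonneg _), Real.sqrt_sq (by positivity)]

lemma phiProf_eq (σ ω z : ℝ) (hσ0 : 0 < σ) (hω : 0 < ω) (hz0 : 0 < z) (hz1 : z < 1) (x : ℝ) :
    phiProf σ ω (-2 * z * Real.sqrt ω) x
      = (((2 * Real.sqrt ω * (σ + 1)) ^ (1 / (2 * σ)) : ℝ) : ℂ) *
        ((fun x : ℝ => Complex.exp (-Complex.I * (z * x : ℝ)) * gProf σ z x)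
          (Real.sqrt ω * x)) := by
  set sw := Real.sqrt ω with hswdef
  set s1 := Real.sqrt (1 - z ^ 2) with hs1def
  have hswpos : 0 < sw := Real.sqrt_pos.mpr hω
  have h1z : 0 < 1 - z ^ 2 := by nlinarith
  have hs1pos : 0 < s1 := Real.sqrt_pos.mpr h1z
  have hs1sq : s1 ^ 2 = 1 - z ^ 2 := Real.sq_sqrt h1z.le
  have hswsq : sw ^ 2 = ω := Real.sq_sqrt hω.le
  have hc : 4 * ω - (-2 * z * sw) ^ 2 = (2 * (sw * s1)) ^ 2 := by
    linear_combination (-4 : ℝ) * hswsq - 4 * sw ^ 2 * hs1sq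
  have hsqrt : Real.sqrt (4 * ω - (-2 * z * sw) ^ 2) = 2 * (sw * s1) := by
    rw [hc]; exact Real.sqrt_sq (by positivity)
  have hch : ∀ t : ℝ, 0 < Real.cosh t + z := fun t => add_pos (Real.cosh_pos t) hz0
  have hbase : ∀ y : ℝ,
      (σ + 1) * (4 * ω - (-2 * z * sw) ^ 2) /
        (2 * sw * Real.cosh (σ * Real.sqrt (4 * ω - (-2 * z * sw) ^ 2) * y) - (-2 * z * sw))
      = 2 * sw * (σ + 1) * ((1 - z ^ 2) *
          (Real.cosh (2 * σ * (s1 * (sw * y))) + z)⁻¹) := by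
    intro y
    rw [hsqrt, hc]
    have harg : σ * (2 * (sw * s1)) * y = 2 * σ * (s1 * (sw * y)) := by ring
    rw [harg]
    have hden : 2 * sw * Real.cosh (2 * σ * (s1 * (sw * y))) - -2 * z * sw
        = 2 * sw * (Real.cosh (2 * σ * (s1 * (sw * y))) + z) := by ring
    rw [hden]
    have hnum : (σ + 1) * (2 * (sw * s1)) ^ 2 = (σ + 1) * (4 * sw ^ 2 * (1 - z ^ 2)) := by
      rw [← hs1sq]; ring
    rw [hnum]
    have hd : (0 : ℝ) < 2 * sw * (Real.cosh (2 * σ * (s1 * (sw * y))) + z) := by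
      have := hch (2 * σ * (s1 * (sw * y))); positivity
    field_simp
    ring
  have hbase_nonneg : ∀ y : ℝ, (0 : ℝ) ≤ 2 * sw * (σ + 1) * ((1 - z ^ 2) *
      (Real.cosh (2 * σ * (s1 * (sw * y))) + z)⁻¹) := by
    intro y
    have := hch (2 * σ * (s1 * (sw * y)))
    positivity
  have hPhi : ∀ y : ℝ, PhiProf σ ω (-2 * z * sw) y
      = (2 * sw * (σ + 1)) ^ (1 / (2 * σ)) *
        ((1 - z ^ 2) ^ (1 / (2 * σ)) * hProf σ z (s1 * (sw * y))) := by
    intro y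
    unfold PhiProf hProf
    rw [hbase y]
    have h := hch (2 * σ * (s1 * (sw * y)))
    rw [Real.mul_rpow (by positivity) (mul_nonneg h1z.le (inv_nonneg.mpr h.le)),
      Real.mul_rpow h1z.le (inv_nonneg.mpr h.le),
      Real.inv_rpow h.le, ← Real.rpow_neg h.le]
  have hPhiPow : ∀ y : ℝ, PhiProf σ ω (-2 * z * sw) y ^ (2 * σ)
      = 2 * sw * (σ + 1) * (1 - z ^ 2) * (fun t : ℝ => hProf σ z t ^ (2 * σ)) (s1 * sw * y) := by
    intro y
    have hh : hProf σ z (s1 * sw * y) ^ (2 * σ)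
        = (Real.cosh (2 * σ * (s1 * (sw * y))) + z)⁻¹ := by
      unfold hProf
      rw [← Real.rpow_mul (hch _).le,
        show -(1 / (2 * σ)) * (2 * σ) = -1 by field_simp, Real.rpow_neg_one,
        show 2 * σ * (s1 * sw * y) = 2 * σ * (s1 * (sw * y)) by ring]
    unfold PhiProf
    rw [hbase y, ← Real.rpow_mul (hbase_nonneg y),
      show 1 / (2 * σ) * (2 * σ) = 1 by field_simp, Real.rpow_one]
    simp only [hh]
    ring
  have hint : (1 / (2 * σ + 2)) * ∫ y in Set.Iic x, PhiProf σ ω (-2 * z * sw) y ^ (2 * σ)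
      = s1 * ∫ y in Set.Iic (s1 * (sw * x)), hProf σ z y ^ (2 * σ) := by
    simp_rw [hPhiPow]
    have hcov : (∫ y in Set.Iic x, hProf σ z (s1 * sw * y) ^ (2 * σ))
        = (s1 * sw)⁻¹ * ∫ y in Set.Iic (s1 * sw * x), hProf σ z y ^ (2 * σ) :=
      integral_Iic_comp_mul_left (fun t : ℝ => hProf σ z t ^ (2 * σ))
        (mul_pos hs1pos hswpos) x
    rw [MeasureTheory.integral_const_mul, hcov,
      show s1 * sw * x = s1 * (sw * x) by ring]
    have hconst : (1 / (2 * σ + 2)) * (2 * sw * (σ + 1) * (1 - z ^ 2) * (s1 * sw)⁻¹) = s1 := by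
      rw [← hs1sq]
      have hσ1 : (2 * σ + 2 : ℝ) ≠ 0 := by positivity
      field_simp
    calc (1 / (2 * σ + 2)) * (2 * sw * (σ + 1) * (1 - z ^ 2) *
          ((s1 * sw)⁻¹ * ∫ y in Set.Iic (s1 * (sw * x)), hProf σ z y ^ (2 * σ)))
        = ((1 / (2 * σ + 2)) * (2 * sw * (σ + 1) * (1 - z ^ 2) * (s1 * sw)⁻¹)) *
            ∫ y in Set.Iic (s1 * (sw * x)), hProf σ z y ^ (2 * σ) := by ring
      _ = s1 * ∫ y in Set.Iic (s1 * (sw * x)), hProf σ z y ^ (2 * σ) := by rw [hconst]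
  -- assemble
  simp only
  unfold phiProf gProf
  rw [← hs1def, hPhi x, hint,
    show (-2 * z * sw / 2 * x : ℝ) = -(z * (sw * x)) by ring]
  push_cast
  rw [show Complex.I * (-(↑z * (↑sw * ↑x)) -
        ↑s1 * ↑(∫ y in Set.Iic (s1 * (sw * x)), hProf σ z y ^ (2 * σ)))
      = -Complex.I * (↑z * (↑sw * ↑x)) +
        -Complex.I * (↑s1 * ↑(∫ y in Set.Iic (s1 * (sw * x)), hProf σ z y ^ (2 * σ)))
      from by ring,
    Complex.exp_add]
  ring

/-- Exact scaling identity for the `Ḣ^{s_c}` norm of the solitary-wave profile with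
`c = −2z√ω`, where `s_c = 1/2 − 1/(2σ)`. -/
theorem solitary_wave_Hdot_scaling (σ ω z : ℝ) (hσ : 2 ≤ σ) (hω : 0 < ω)
    (hz : z ∈ Set.Ioo (0 : ℝ) 1) :
    hDotNorm (1 / 2 - 1 / (2 * σ)) (phiProf σ ω (-2 * z * Real.sqrt ω)) =
      (2 * (σ + 1)) ^ (1 / (2 * σ)) *
        hDotNorm (1 / 2 - 1 / (2 * σ))
          (fun x : ℝ => Complex.exp (-Complex.I * (z * x : ℝ)) * gProf σ z x) := by
  obtain ⟨hz0, hz1⟩ := hz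
  have hσ0 : (0 : ℝ) < σ := lt_of_lt_of_le two_pos hσ
  have hswpos : 0 < Real.sqrt ω := Real.sqrt_pos.mpr hω
  have key : phiProf σ ω (-2 * z * Real.sqrt ω)
      = fun x : ℝ => (((2 * Real.sqrt ω * (σ + 1)) ^ (1 / (2 * σ)) : ℝ) : ℂ) *
        ((fun x : ℝ => Complex.exp (-Complex.I * (z * x : ℝ)) * gProf σ z x)
          (Real.sqrt ω * x)) := by
    funext x
    exact phiProf_eq σ ω z hσ0 hω hz0 hz1 x
  have happ := hDotNorm_comp_mul_left (1 / 2 - 1 / (2 * σ))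
    (fun x : ℝ => Complex.exp (-Complex.I * (z * x : ℝ)) * gProf σ z x)
    (A := (2 * Real.sqrt ω * (σ + 1)) ^ (1 / (2 * σ)))
    (Real.rpow_nonneg (by positivity) _) hswpos
  rw [key, happ]
  congr 1
  rw [show (1 / 2 - 1 / (2 * σ) - 1 / 2 : ℝ) = -(1 / (2 * σ)) by ring,
    show (2 * Real.sqrt ω * (σ + 1) : ℝ) = (2 * (σ + 1)) * Real.sqrt ω by ring,
    Real.mul_rpow (by positivity) hswpos.le, mul_assoc,
    ← Real.rpow_add hswpos, add_neg_cancel, Real.rpow_zero, mul_one]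
end
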